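/- In the universal enveloping algebra of gl_N(ℂ) with Z_{ij} = ℏe_{ij}, the element C_π^{(r)} := Σ_{i:[3]→[N]} (Z^{r})_{i(1)i(3)} Z_{i(2)i(1)} Z_{i(3)i(2)} (corresponding to the permutation π = (1 3 2) with exponents (r,1,1)) equals C_{r+2} + ℏ C_r C_1 − ℏ N C_{r+1}, where C_k := Tr Z^k = Σ_{i:[k]→[N]} Z_{i(1)i(2)}⋯Z_{i(k)i(1)}. -/

import Mathlib

attribute [local instance 100] LieRing.ofAssociativeRing

/-- The matrix `Z` with entries `Z_{ij} = ℏ e_{ij}` over the universal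
enveloping algebra of `gl_N(ℂ)`. -/
noncomputable def ZM (N : ℕ) (h : ℂ) :
    Matrix (Fin N) (Fin N) (UniversalEnvelopingAlgebra ℂ (Matrix (Fin N) (Fin N) ℂ)) :=
  fun i j => h • UniversalEnvelopingAlgebra.ι ℂ (Matrix.single i j 1)

/-- The higher Casimir elements `C_k = Tr Z^k`. -/
noncomputable def Cas (N : ℕ) (h : ℂ) (k : ℕ) :
    UniversalEnvelopingAlgebra ℂ (Matrix (Fin N) (Fin N) ℂ) :=
  (ZM N h ^ k).trace

/-- The commutation relation `Z_{i2 i1} Z_{i3 i2}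
  = Z_{i3 i2} Z_{i2 i1} + ℏ (δ_{i1 i3} Z_{i2 i2} - Z_{i3 i1})`. -/
lemma ZM_swap (N : ℕ) (h : ℂ) (i1 i2 i3 : Fin N) :
    ZM N h i2 i1 * ZM N h i3 i2
      = ZM N h i3 i2 * ZM N h i2 i1 + (if i1 = i3 then h • ZM N h i2 i2 else 0)
        - h • ZM N h i3 i1 := by
  have hcomm :
      UniversalEnvelopingAlgebra.ι ℂ (Matrix.single i2 i1 (1:ℂ))
        * UniversalEnvelopingAlgebra.ι ℂ (Matrix.single i3 i2 (1:ℂ))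
      = UniversalEnvelopingAlgebra.ι ℂ (Matrix.single i3 i2 (1:ℂ))
        * UniversalEnvelopingAlgebra.ι ℂ (Matrix.single i2 i1 (1:ℂ))
        + UniversalEnvelopingAlgebra.ι ℂ
          ((if i1 = i3 then Matrix.single i2 i2 (1:ℂ) else 0)
            - Matrix.single i3 i1 1) := by
    have hbr : Matrix.single i2 i1 (1:ℂ) * Matrix.single i3 i2 (1:ℂ)
          - Matrix.single i3 i2 (1:ℂ) * Matrix.single i2 i1 (1:ℂ)
        = (if i1 = i3 then Matrix.single i2 i2 (1:ℂ) else 0)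
          - Matrix.single i3 i1 1 := by
      by_cases hc : i1 = i3
      · subst hc
        simp [Matrix.single_mul_single_same]
      · rw [Matrix.single_mul_single_of_ne (h := hc), Matrix.single_mul_single_same]
        simp [hc]
    rw [← hbr]
    have := (UniversalEnvelopingAlgebra.ι ℂ).map_lie
      (Matrix.single i2 i1 (1:ℂ)) (Matrix.single i3 i2 (1:ℂ))
    rw [Ring.lie_def, Ring.lie_def] at this
    rw [this]; abel
  simp only [ZM, smul_mul_assoc, mul_smul_comm, hcomm]
  by_cases hc : i1 = i3 <;>
    simp [hc, smul_sub, smul_add, map_sub] <;> abel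

/-- The Biasimir for `π = (1 3 2)` with exponents `(r,1,1)`:
`Σ_i (Z^r)_{i(1)i(3)} Z_{i(2)i(1)} Z_{i(3)i(2)} = C_{r+2} + ℏ C_r C_1 − ℏ N C_{r+1}`. -/
theorem biasimir_132 (N : ℕ) (h : ℂ) (r : ℕ) (hr : 1 ≤ r) :
    (∑ i1 : Fin N, ∑ i2 : Fin N, ∑ i3 : Fin N,
        (ZM N h ^ r) i1 i3 * ZM N h i2 i1 * ZM N h i3 i2) =
      Cas N h (r + 2) + h • (Cas N h r * Cas N h 1) - (h * N) • Cas N h (r + 1) := by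
  have key := ZM_swap N h
  have t1 : Cas N h (r + 2)
      = ∑ i1 : Fin N, ∑ i2 : Fin N, ∑ i3 : Fin N,
          (ZM N h ^ r) i1 i3 * (ZM N h i3 i2 * ZM N h i2 i1) := by
    simp only [Cas, Matrix.trace, Matrix.diag, pow_succ, Matrix.mul_apply,
      Finset.sum_mul, mul_assoc]
  have t2 : h • (Cas N h r * Cas N h 1)
      = h • ∑ i1 : Fin N, ∑ i2 : Fin N, (ZM N h ^ r) i1 i1 * ZM N h i2 i2 := by
    simp only [Cas, Matrix.trace, Matrix.diag, pow_one, Finset.sum_mul,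
      Finset.mul_sum]
    rw [Finset.sum_comm]
  have t3 : (h * N) • Cas N h (r + 1)
      = (h * N) • ∑ i1 : Fin N, ∑ i3 : Fin N, (ZM N h ^ r) i1 i3 * ZM N h i3 i1 := by
    simp only [Cas, Matrix.trace, Matrix.diag, pow_succ, Matrix.mul_apply]
  rw [t1, t2, t3]
  simp only [mul_assoc, key, mul_add, mul_sub, Finset.sum_add_distrib,
    Finset.sum_sub_distrib, mul_ite, mul_zero, Finset.sum_ite_eq,
    Finset.mem_univ, if_true, mul_smul_comm, ← Finset.smul_sum]
  congr 1
  simp only [Finset.sum_const, Finset.card_univ, Fintype.card_fin, ← Finset.smul_sum,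
    smul_comm (N : ℕ) h]
  rw [← Nat.cast_smul_eq_nsmul ℂ N
    (∑ i1 : Fin N, ∑ i3 : Fin N, (ZM N h ^ r) i1 i3 * ZM N h i3 i1), smul_smul]
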